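/- (Diagonal counting estimate.) Let ε > 0 and c ≥ 1. There is a constant C, depending only on ε and c, such that the following holds. Let γ be real, let N, T, K, P ≥ 2, and set R = PT/N, and assume R ≥ 1. Then Σ_p Σ_{r₁, r₂} min{1/T, P·N^ε/(K·N·|r₁ − r₂|)} ≤ C·(π*(P)·R/T + π*(P)·R·N^ε·log(2R)/(K·N)), where the outer sum runs over primes p with P ≤ p ≤ 2P, the inner sum runs over pairs of integers r₁, r₂ with p ∤ r₁r₂, |r₁ − γp| ≤ cR, |r₂ − γp| ≤ cR, and r₁ ≡ r₂ (mod p), π*(P) denotes the number of primes in [P, 2P], and for r₁ = r₂ the summand is interpreted as 1/T. -/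

import Mathlib

lemma harm_real (M : ℕ) : ∑ d ∈ Finset.Icc 1 M, (d:ℝ)⁻¹ ≤ 1 + Real.log M := by
  have h := harmonic_le_one_add_log M
  have h2 : ((harmonic M : ℚ) : ℝ) = ∑ d ∈ Finset.Icc 1 M, (d:ℝ)⁻¹ := by
    rw [harmonic_eq_sum_Icc]; push_cast; rfl
  linarith [h2 ▸ h]

lemma sym_sum (M : ℕ) :
    ∑ m ∈ (Finset.Icc (-(M:ℤ)) M).filter (fun m => m ≠ 0), (|(m:ℝ)|)⁻¹
      ≤ 2 * (1 + Real.log M) := by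
  have hset : (Finset.Icc (-(M:ℤ)) M).filter (fun m => m ≠ 0)
      = Finset.Icc (-(M:ℤ)) (-1) ∪ Finset.Icc 1 M := by
    ext m; simp only [Finset.mem_filter, Finset.mem_Icc, Finset.mem_union]; omega
  have hdisj : Disjoint (Finset.Icc (-(M:ℤ)) (-1)) (Finset.Icc (1:ℤ) M) := by
    rw [Finset.disjoint_left]; intro m hm hm'
    simp only [Finset.mem_Icc] at hm hm'; omega
  rw [hset, Finset.sum_union hdisj]
  have hpos : ∑ m ∈ Finset.Icc (1:ℤ) M, (|(m:ℝ)|)⁻¹ ≤ 1 + Real.log M := by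
    have := harm_real M
    rw [show ∑ m ∈ Finset.Icc (1:ℤ) M, (|(m:ℝ)|)⁻¹ = ∑ d ∈ Finset.Icc 1 M, (d:ℝ)⁻¹ from ?_]
    · exact this
    · refine Finset.sum_nbij' Int.toNat (fun n => (n:ℤ)) ?_ ?_ ?_ ?_ ?_
      · intro m hm; simp only [Finset.mem_Icc] at hm ⊢; omega
      · intro n hn; simp only [Finset.mem_Icc] at hn ⊢; omega
      · intro m hm; simp only [Finset.mem_Icc] at hm
        show ((m.toNat : ℤ)) = m; omega
      · intro n hn; simp
      · intro m hm; simp only [Finset.mem_Icc] at hm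
        rw [abs_of_pos (by exact_mod_cast hm.1.trans_lt' (by norm_num) : (0:ℝ) < m)]
        congr 1
        exact_mod_cast (Int.toNat_of_nonneg (by omega)).symm
  have hneg : ∑ m ∈ Finset.Icc (-(M:ℤ)) (-1), (|(m:ℝ)|)⁻¹
      = ∑ m ∈ Finset.Icc (1:ℤ) M, (|(m:ℝ)|)⁻¹ := by
    refine Finset.sum_nbij' (fun m => -m) (fun m => -m) ?_ ?_ ?_ ?_ ?_
    · intro m hm; simp only [Finset.mem_Icc] at hm ⊢; omega
    · intro m hm; simp only [Finset.mem_Icc] at hm ⊢; omega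
    · intro m _; ring
    · intro m _; ring
    · intro m _; push_cast; rw [abs_neg]
  rw [hneg]
  linarith

lemma key_sum (p a b r₁ : ℤ) (hp : 1 ≤ p) (hr₁ : a ≤ r₁ ∧ r₁ ≤ b) (M : ℕ)
    (hM : b - a ≤ (M:ℤ)) :
    ∑ r₂ ∈ (Finset.Icc a b).filter (fun r₂ => r₂ ≠ r₁ ∧ p ∣ (r₁ - r₂)),
        (|(r₁:ℝ) - (r₂:ℝ)|)⁻¹
      ≤ (p:ℝ)⁻¹ * (2 * (1 + Real.log M)) := by
  set E := (Finset.Icc a b).filter (fun r₂ => r₂ ≠ r₁ ∧ p ∣ (r₁ - r₂)) with hE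
  set e : ℤ → ℤ := fun r₂ => (r₁ - r₂) / p with he
  have hmul : ∀ r₂ ∈ E, r₁ - r₂ = p * e r₂ := by
    intro r₂ hr₂
    simp only [hE, Finset.mem_filter] at hr₂
    exact (Int.mul_ediv_cancel' hr₂.2.2).symm
  have hstep : ∀ r₂ ∈ E, (|(r₁:ℝ) - (r₂:ℝ)|)⁻¹ = (p:ℝ)⁻¹ * (|((e r₂ : ℤ):ℝ)|)⁻¹ := by
    intro r₂ hr₂
    have h1 : (r₁:ℝ) - (r₂:ℝ) = ((p * e r₂ : ℤ) : ℝ) := by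
      rw [← hmul r₂ hr₂]; push_cast; ring
    rw [h1]
    push_cast
    rw [abs_mul, mul_inv, abs_of_pos (by exact_mod_cast hp.trans_lt' (by norm_num) : (0:ℝ) < p)]
  rw [Finset.sum_congr rfl hstep, ← Finset.mul_sum]
  have hinj : ∀ x ∈ E, ∀ y ∈ E, e x = e y → x = y := by
    intro x hx y hy hxy
    have h1 := hmul x hx
    have h2 := hmul y hy
    rw [hxy] at h1
    omega
  have himg : ∑ r₂ ∈ E, (|((e r₂ : ℤ):ℝ)|)⁻¹ = ∑ m ∈ E.image e, (|(m:ℝ)|)⁻¹ :=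
    (Finset.sum_image (f := fun m : ℤ => (|(m:ℝ)|)⁻¹) hinj).symm
  rw [himg]
  have hsub : E.image e ⊆ (Finset.Icc (-(M:ℤ)) M).filter (fun m => m ≠ 0) := by
    intro m hm
    simp only [Finset.mem_image] at hm
    obtain ⟨r₂, hr₂, rfl⟩ := hm
    have h1 := hmul r₂ hr₂
    simp only [hE, Finset.mem_filter, Finset.mem_Icc] at hr₂
    have hne : e r₂ ≠ 0 := by
      intro h0; rw [h0, mul_zero] at h1; omega
    have hb1 : -(M:ℤ) ≤ p * e r₂ ∧ p * e r₂ ≤ M := by omega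
    have hbm : -(M:ℤ) ≤ e r₂ ∧ e r₂ ≤ M := by
      rcases le_or_gt 0 (e r₂) with h | h
      · constructor
        · have : (0:ℤ) ≤ M := by positivity
          omega
        · have := le_mul_of_one_le_left h hp
          omega
      · constructor
        · have : p * e r₂ ≤ 1 * e r₂ := mul_le_mul_of_nonpos_right hp h.le
          omega
        · have : (0:ℤ) ≤ M := by positivity
          omega
    simp only [Finset.mem_filter, Finset.mem_Icc]
    exact ⟨⟨hbm.1, hbm.2⟩, hne⟩
  have hmono := Finset.sum_le_sum_of_subset_of_nonneg hsub
    (fun m _ _ => by positivity : ∀ m ∈ (Finset.Icc (-(M:ℤ)) M).filter (fun m => m ≠ 0),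
      m ∉ E.image e → 0 ≤ (|(m:ℝ)|)⁻¹)
  have := hmono.trans (sym_sum M)
  have hp' : (0:ℝ) ≤ (p:ℝ)⁻¹ := by positivity
  exact mul_le_mul_of_nonneg_left this hp'


set_option maxHeartbeats 1000000 in
theorem stmt17 (ε c : ℝ) (hε : 0 < ε) (hc : 1 ≤ c) :
    ∃ C : ℝ, 0 < C ∧
      ∀ (γ N T K P R : ℝ),
        2 ≤ N → 2 ≤ T → 2 ≤ K → 2 ≤ P → R = P * T / N → 1 ≤ R →
        (∑ p ∈ (Finset.Icc ⌈P⌉₊ ⌊2 * P⌋₊).filter Nat.Prime,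
          ∑ r₁ ∈ Finset.Icc ⌈γ * p - c * R⌉ ⌊γ * p + c * R⌋,
            ∑ r₂ ∈ Finset.Icc ⌈γ * p - c * R⌉ ⌊γ * p + c * R⌋,
              if ¬((p : ℤ) ∣ r₁ * r₂) ∧ r₁ ≡ r₂ [ZMOD (p : ℤ)] then
                (if r₁ = r₂ then 1 / T
                  else min (1 / T) (P * N ^ ε / (K * N * |(r₁ : ℝ) - (r₂ : ℝ)|)))
              else 0)
          ≤ C * ((((Finset.Icc ⌈P⌉₊ ⌊2 * P⌋₊).filter Nat.Prime).card : ℝ) * R / T +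
              (((Finset.Icc ⌈P⌉₊ ⌊2 * P⌋₊).filter Nat.Prime).card : ℝ) * R * N ^ ε *
                Real.log (2 * R) / (K * N)) := by
  have hlogc : 0 ≤ Real.log c := Real.log_nonneg hc
  have hlog2 : 0 < Real.log 2 := Real.log_pos (by norm_num)
  set B : ℝ := (1 + Real.log c) / Real.log 2 + 1 with hBdef
  have hB1 : 1 ≤ B := by
    have : 0 ≤ (1 + Real.log c) / Real.log 2 := by positivity
    simp only [hBdef]; linarith
  have hc0 : 0 < c := by linarith
  refine ⟨3 * c + 6 * c * B, by nlinarith, ?_⟩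
  intro γ N T K P R hN hT hK hP hRdef hR1
  have hT0 : (0:ℝ) < T := by linarith
  have hK0 : (0:ℝ) < K := by linarith
  have hN0 : (0:ℝ) < N := by linarith
  have hP0 : (0:ℝ) < P := by linarith
  have hR0 : (0:ℝ) < R := by linarith
  have hNε : (0:ℝ) < N ^ ε := by positivity
  have hcR1 : 1 ≤ c * R := by nlinarith
  have hlog2R : Real.log 2 ≤ Real.log (2 * R) := by
    gcongr <;> linarith
  have hlog2R0 : 0 ≤ Real.log (2 * R) := hlog2.le.trans hlog2R
  -- key bound: 1 + log (2*(c*R)) ≤ B * log (2*R)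
  have hBkey : 1 + Real.log (2 * (c * R)) ≤ B * Real.log (2 * R) := by
    have h1 : Real.log (2 * (c * R)) = Real.log c + Real.log (2 * R) := by
      rw [show (2:ℝ) * (c * R) = c * (2 * R) by ring,
        Real.log_mul (ne_of_gt hc0) (by positivity)]
    have h2 : 1 + Real.log c ≤ ((1 + Real.log c) / Real.log 2) * Real.log (2 * R) := by
      have h3 : ((1 + Real.log c) / Real.log 2) * Real.log 2
          ≤ ((1 + Real.log c) / Real.log 2) * Real.log (2 * R) :=
        mul_le_mul_of_nonneg_left hlog2R (by positivity)
      rwa [div_mul_cancel₀ _ (ne_of_gt hlog2)] at h3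
    simp only [hBdef]
    rw [h1]; ring_nf; ring_nf at h2; linarith
  -- bound the inner double sum for each prime p
  set D : ℝ := 3 * c * (R / T) + 6 * c * B * (R * N ^ ε * Real.log (2 * R) / (K * N)) with hDdef
  have hinner : ∀ p ∈ (Finset.Icc ⌈P⌉₊ ⌊2 * P⌋₊).filter Nat.Prime,
      (∑ r₁ ∈ Finset.Icc ⌈γ * p - c * R⌉ ⌊γ * p + c * R⌋,
        ∑ r₂ ∈ Finset.Icc ⌈γ * p - c * R⌉ ⌊γ * p + c * R⌋,
          if ¬((p : ℤ) ∣ r₁ * r₂) ∧ r₁ ≡ r₂ [ZMOD (p : ℤ)] then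
            (if r₁ = r₂ then 1 / T
              else min (1 / T) (P * N ^ ε / (K * N * |(r₁ : ℝ) - (r₂ : ℝ)|)))
          else 0) ≤ D := by
    intro p hp
    simp only [Finset.mem_filter, Finset.mem_Icc] at hp
    have hpP : P ≤ (p : ℝ) := (Nat.le_ceil P).trans (by exact_mod_cast hp.1.1)
    have hp1 : (1:ℤ) ≤ (p:ℤ) := by
      have : (1:ℝ) ≤ (p:ℝ) := by linarith
      exact_mod_cast this
    have hp0 : (0:ℝ) < (p:ℝ) := by linarith
    set a := ⌈γ * p - c * R⌉ with ha
    set b := ⌊γ * p + c * R⌋ with hb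
    set I := Finset.Icc a b with hI
    set M : ℕ := (b - a).toNat with hM
    have hMb : b - a ≤ (M:ℤ) := Int.self_le_toNat _
    have hMr : (M:ℝ) ≤ 2 * (c * R) := by
      rcases le_or_gt (b - a) 0 with h | h
      · have : M = 0 := by omega
        rw [this]; push_cast; positivity
      · have hM' : (M:ℤ) = b - a := Int.toNat_of_nonneg h.le
        have hbr : (b:ℝ) ≤ γ * p + c * R := Int.floor_le _
        have har : γ * p - c * R ≤ (a:ℝ) := Int.le_ceil _
        have : ((M:ℤ):ℝ) = (b:ℝ) - (a:ℝ) := by rw [hM']; push_cast; ring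
        push_cast at this ⊢
        linarith
    have hlogM : Real.log M ≤ Real.log (2 * (c * R)) := by
      rcases Nat.eq_zero_or_pos M with h | h
      · rw [h]; push_cast; rw [Real.log_zero]
        exact Real.log_nonneg (by nlinarith)
      · have : (1:ℝ) ≤ (M:ℝ) := by exact_mod_cast h
        gcongr <;> linarith
    have hcard : ((I.card : ℕ) : ℝ) ≤ 3 * (c * R) := by
      rcases le_or_gt (b + 1 - a) 0 with h | h
      · have : I.card = 0 := by
          rw [hI, Int.card_Icc]; omega
        rw [this]; push_cast; positivity
      · have h1 : (I.card : ℤ) = b + 1 - a := by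
          rw [hI, Int.card_Icc]; omega
        have hbr : (b:ℝ) ≤ γ * p + c * R := Int.floor_le _
        have har : γ * p - c * R ≤ (a:ℝ) := Int.le_ceil _
        have h2 : ((I.card : ℤ):ℝ) = (b:ℝ) + 1 - (a:ℝ) := by rw [h1]; push_cast; ring
        push_cast at h2 ⊢
        linarith
    set W : ℝ := P * N ^ ε / (K * N) with hW
    have hW0 : 0 ≤ W := by positivity
    have hrow : ∀ r₁ ∈ I,
        (∑ r₂ ∈ I,
          if ¬((p : ℤ) ∣ r₁ * r₂) ∧ r₁ ≡ r₂ [ZMOD (p : ℤ)] then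
            (if r₁ = r₂ then 1 / T
              else min (1 / T) (P * N ^ ε / (K * N * |(r₁ : ℝ) - (r₂ : ℝ)|)))
          else 0)
        ≤ 1 / T + W * ((p:ℝ)⁻¹ * (2 * (1 + Real.log M))) := by
      intro r₁ hr₁
      have hr₁' := Finset.mem_Icc.mp hr₁
      have step1 : (∑ r₂ ∈ I,
          if ¬((p : ℤ) ∣ r₁ * r₂) ∧ r₁ ≡ r₂ [ZMOD (p : ℤ)] then
            (if r₁ = r₂ then 1 / T
              else min (1 / T) (P * N ^ ε / (K * N * |(r₁ : ℝ) - (r₂ : ℝ)|)))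
          else 0)
          ≤ ∑ r₂ ∈ I, ((if r₂ = r₁ then 1 / T else 0)
            + (if r₂ ≠ r₁ ∧ (p:ℤ) ∣ (r₁ - r₂) then W * (|(r₁ : ℝ) - (r₂ : ℝ)|)⁻¹ else 0)) := by
        apply Finset.sum_le_sum
        intro r₂ _
        by_cases hcond : ¬((p : ℤ) ∣ r₁ * r₂) ∧ r₁ ≡ r₂ [ZMOD (p : ℤ)]
        · rw [if_pos hcond]
          by_cases heq : r₁ = r₂
          · subst heq
            simp
          · rw [if_neg heq, if_neg (fun h => heq h.symm), zero_add]
            have hdvd : (p:ℤ) ∣ (r₁ - r₂) := dvd_sub_comm.mp (Int.ModEq.dvd hcond.2)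
            rw [if_pos ⟨fun h => heq h.symm, hdvd⟩]
            refine (min_le_right _ _).trans_eq ?_
            rw [hW, div_mul_eq_div_div, div_eq_mul_inv]
        · rw [if_neg hcond]
          apply add_nonneg
          · split <;> positivity
          · split
            · have : (0:ℝ) ≤ W := hW0
              positivity
            · exact le_rfl
      refine step1.trans ?_
      rw [Finset.sum_add_distrib]
      have hfirst : ∑ r₂ ∈ I, (if r₂ = r₁ then (1:ℝ)/T else 0) = 1/T := by
        rw [Finset.sum_ite_eq' I r₁ (fun _ => (1:ℝ)/T), if_pos hr₁]
      rw [hfirst]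
      apply add_le_add_right
      have hsecond : ∑ r₂ ∈ I,
          (if r₂ ≠ r₁ ∧ (p:ℤ) ∣ (r₁ - r₂) then W * (|(r₁:ℝ)-(r₂:ℝ)|)⁻¹ else 0)
          = W * ∑ r₂ ∈ I.filter (fun r₂ => r₂ ≠ r₁ ∧ (p:ℤ) ∣ (r₁ - r₂)),
              (|(r₁:ℝ)-(r₂:ℝ)|)⁻¹ := by
        rw [Finset.mul_sum, Finset.sum_filter]
      rw [hsecond]
      exact mul_le_mul_of_nonneg_left (key_sum (p:ℤ) a b r₁ hp1 hr₁' M hMb) hW0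
    -- now sum over r₁
    have hlogMnn : (0:ℝ) ≤ Real.log M := Real.log_natCast_nonneg M
    have hX : W * ((p:ℝ)⁻¹ * (2 * (1 + Real.log M)))
        ≤ (N ^ ε / (K * N)) * (2 * B * Real.log (2 * R)) := by
      have e1 : W * ((p:ℝ)⁻¹ * (2 * (1 + Real.log M)))
          = (N ^ ε / (K * N)) * ((P / (p:ℝ)) * (2 * (1 + Real.log M))) := by
        rw [hW]; ring
      have h2 : P / (p:ℝ) ≤ 1 := (div_le_one hp0).mpr hpP
      have h4 : 1 + Real.log M ≤ B * Real.log (2 * R) := by linarith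
      have h5 : (P / (p:ℝ)) * (2 * (1 + Real.log M)) ≤ 1 * (2 * B * Real.log (2 * R)) := by
        apply mul_le_mul h2 (by linarith) (by linarith) zero_le_one
      rw [e1, one_mul] at *
      exact mul_le_mul_of_nonneg_left (by linarith) (by positivity)
    calc (∑ r₁ ∈ I, ∑ r₂ ∈ I,
        if ¬((p : ℤ) ∣ r₁ * r₂) ∧ r₁ ≡ r₂ [ZMOD (p : ℤ)] then
          (if r₁ = r₂ then 1 / T
            else min (1 / T) (P * N ^ ε / (K * N * |(r₁ : ℝ) - (r₂ : ℝ)|)))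
        else 0)
        ≤ ∑ r₁ ∈ I, (1 / T + W * ((p:ℝ)⁻¹ * (2 * (1 + Real.log M)))) :=
          Finset.sum_le_sum hrow
      _ = (I.card : ℝ) * (1 / T + W * ((p:ℝ)⁻¹ * (2 * (1 + Real.log M)))) := by
          rw [Finset.sum_const, nsmul_eq_mul]
      _ ≤ 3 * (c * R) * (1 / T + (N ^ ε / (K * N)) * (2 * B * Real.log (2 * R))) := by
          apply mul_le_mul hcard (add_le_add_right hX _) (by positivity) (by positivity)
      _ ≤ D := le_of_eq (by rw [hDdef]; ring)
  -- sum over p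
  set cd : ℝ := (((Finset.Icc ⌈P⌉₊ ⌊2 * P⌋₊).filter Nat.Prime).card : ℝ) with hcd
  have hcd0 : 0 ≤ cd := by positivity
  have hx0 : 0 ≤ cd * R / T := by positivity
  have hy0 : 0 ≤ cd * R * N ^ ε * Real.log (2 * R) / (K * N) := by
    apply div_nonneg _ (by positivity)
    exact mul_nonneg (by positivity) hlog2R0
  calc (∑ p ∈ (Finset.Icc ⌈P⌉₊ ⌊2 * P⌋₊).filter Nat.Prime,
      ∑ r₁ ∈ Finset.Icc ⌈γ * p - c * R⌉ ⌊γ * p + c * R⌋,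
        ∑ r₂ ∈ Finset.Icc ⌈γ * p - c * R⌉ ⌊γ * p + c * R⌋,
          if ¬((p : ℤ) ∣ r₁ * r₂) ∧ r₁ ≡ r₂ [ZMOD (p : ℤ)] then
            (if r₁ = r₂ then 1 / T
              else min (1 / T) (P * N ^ ε / (K * N * |(r₁ : ℝ) - (r₂ : ℝ)|)))
          else 0)
      ≤ ((Finset.Icc ⌈P⌉₊ ⌊2 * P⌋₊).filter Nat.Prime).card • D :=
        Finset.sum_le_card_nsmul _ _ _ hinner
    _ = cd * D := nsmul_eq_mul _ _
    _ = 3 * c * (cd * R / T) + 6 * c * B * (cd * R * N ^ ε * Real.log (2 * R) / (K * N)) := by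
        rw [hDdef]; ring
    _ ≤ (3 * c + 6 * c * B) * (cd * R / T)
        + (3 * c + 6 * c * B) * (cd * R * N ^ ε * Real.log (2 * R) / (K * N)) := by
        apply add_le_add
        · exact mul_le_mul_of_nonneg_right (by nlinarith) hx0
        · exact mul_le_mul_of_nonneg_right (by nlinarith) hy0
    _ = (3 * c + 6 * c * B) * (cd * R / T
        + cd * R * N ^ ε * Real.log (2 * R) / (K * N)) := by ring
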